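/- Let K be a field of characteristic 0 and E a directed graph with E⁰ finite. Assume E contains an edge f ∈ E¹ and an infinite path p such that r(f) = s(p) and s(f) ≠ r(f) (so that f is the initial edge of the infinite path f·p). Then the elements 1 + 2f* and 1 + 2f are invertible in L_K(E) (with inverses 1 − 2f* and 1 − 2f, respectively), and the units 1 + 2f* and 1 + 2f generate a non-cyclic free subgroup of the multiplicative group L_K(E)^×. -/

import Mathlib

/-! Leavitt path algebra of a directed graph with finitely many vertices.
The graph is given by types `V` (vertices), `E` (edges) and maps `src rng : E → V`. -/

/-- A vertex is a sink if it emits no edges. -/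
def IsSink {V E : Type} (src : E → V) (v : V) : Prop := ∀ e : E, src e ≠ v

/-- A vertex is an infinite emitter if it emits infinitely many edges. -/
def IsInfEmitter {V E : Type} (src : E → V) (v : V) : Prop :=
  {e : E | src e = v}.Infinite

/-- A vertex is regular if it is neither a sink nor an infinite emitter. -/
def IsRegularVertex {V E : Type} (src : E → V) (v : V) : Prop :=
  ¬ IsSink src v ∧ ¬ IsInfEmitter src v

/-- The generator of the free algebra corresponding to a vertex `v`. -/
def vtx (K V E : Type) [Field K] (v : V) : FreeAlgebra K (V ⊕ E ⊕ E) :=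
  FreeAlgebra.ι K (Sum.inl v)

/-- The generator of the free algebra corresponding to an edge `e`. -/
def edg (K V E : Type) [Field K] (e : E) : FreeAlgebra K (V ⊕ E ⊕ E) :=
  FreeAlgebra.ι K (Sum.inr (Sum.inl e))

/-- The generator of the free algebra corresponding to a ghost edge `e*`. -/
def ghe (K V E : Type) [Field K] (e : E) : FreeAlgebra K (V ⊕ E ⊕ E) :=
  FreeAlgebra.ι K (Sum.inr (Sum.inr e))

/-- The defining relations of the Leavitt path algebra `L_K(E)`: (V), (E1), (E2),
(CK1), (CK2), together with `1 = Σ_{v ∈ E⁰} v` (which makes sense as `V` is finite). -/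
inductive LeavittRel (K V E : Type) [Field K] [Fintype V] (src rng : E → V) :
    FreeAlgebra K (V ⊕ E ⊕ E) → FreeAlgebra K (V ⊕ E ⊕ E) → Prop
  | vtx_same (v : V) :
      LeavittRel K V E src rng (vtx K V E v * vtx K V E v) (vtx K V E v)
  | vtx_ne (v v' : V) (h : v ≠ v') :
      LeavittRel K V E src rng (vtx K V E v * vtx K V E v') 0
  | src_edge (e : E) :
      LeavittRel K V E src rng (vtx K V E (src e) * edg K V E e) (edg K V E e)
  | edge_rng (e : E) :
      LeavittRel K V E src rng (edg K V E e * vtx K V E (rng e)) (edg K V E e)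
  | rng_ghost (e : E) :
      LeavittRel K V E src rng (vtx K V E (rng e) * ghe K V E e) (ghe K V E e)
  | ghost_src (e : E) :
      LeavittRel K V E src rng (ghe K V E e * vtx K V E (src e)) (ghe K V E e)
  | ck1_same (e : E) :
      LeavittRel K V E src rng (ghe K V E e * edg K V E e) (vtx K V E (rng e))
  | ck1_ne (e f : E) (h : e ≠ f) :
      LeavittRel K V E src rng (ghe K V E e * edg K V E f) 0
  | ck2 (v : V) (hreg : IsRegularVertex src v) :
      LeavittRel K V E src rng (vtx K V E v)
        (∑ e ∈ (Set.not_infinite.mp hreg.2).toFinset, edg K V E e * ghe K V E e)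
  | unit : LeavittRel K V E src rng (∑ v : V, vtx K V E v) 1

/-- The Leavitt path algebra `L_K(E)` of a graph with finitely many vertices. -/
abbrev LPA (K V E : Type) [Field K] [Fintype V] (src rng : E → V) : Type :=
  RingQuot (LeavittRel K V E src rng)

/-- The image of a vertex `v` in `L_K(E)`. -/
noncomputable def Vtx (K V E : Type) [Field K] [Fintype V] (src rng : E → V) (v : V) :
    LPA K V E src rng :=
  RingQuot.mkAlgHom K (LeavittRel K V E src rng) (vtx K V E v)

/-- The image of an edge `e` in `L_K(E)`. -/
noncomputable def Edg (K V E : Type) [Field K] [Fintype V] (src rng : E → V) (e : E) :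
    LPA K V E src rng :=
  RingQuot.mkAlgHom K (LeavittRel K V E src rng) (edg K V E e)

/-- The image of a ghost edge `e*` in `L_K(E)`. -/
noncomputable def Ghe (K V E : Type) [Field K] [Fintype V] (src rng : E → V) (e : E) :
    LPA K V E src rng :=
  RingQuot.mkAlgHom K (LeavittRel K V E src rng) (ghe K V E e)


noncomputable section
namespace LPAaux
open scoped Classical

variable {K V E : Type} [Field K] {src rng : E → V}

/-- Infinite paths in the graph. -/
def Pth (src rng : E → V) : Type := {q : ℕ → E // ∀ n, rng (q n) = src (q (n+1))}

/-- Prepend an edge to an infinite path. -/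
def pcons (e : E) (q : Pth src rng) (h : src (q.1 0) = rng e) : Pth src rng :=
  ⟨fun n => match n with | 0 => e | (m+1) => q.1 m,
   by intro n; match n with
      | 0 => exact h.symm
      | (m+1) => exact q.2 m⟩

/-- Drop the first edge of an infinite path. -/
def ptail (q : Pth src rng) : Pth src rng := ⟨fun n => q.1 (n+1), fun n => q.2 (n+1)⟩

@[simp] lemma ptail_pcons (e : E) (q : Pth src rng) (h : src (q.1 0) = rng e) :
    ptail (pcons e q h) = q := rfl

lemma pcons_head_tail (q : Pth src rng) (h : src ((ptail q).1 0) = rng (q.1 0)) :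
    pcons (q.1 0) (ptail q) h = q := by
  apply Subtype.ext; funext n; match n with
  | 0 => rfl
  | (m+1) => rfl

variable (K src rng) in
/-- The module on which `L_K(E)` acts: the free `K`-module on infinite paths. -/
abbrev Mod : Type := Pth src rng →₀ K

variable (K) in
noncomputable def op (t : Pth src rng → Mod K src rng) : Module.End K (Mod K src rng) :=
  Finsupp.lift _ K _ t

@[simp] lemma op_single (t : Pth src rng → Mod K src rng) (q : Pth src rng) (c : K) :
    op K t (Finsupp.single q c) = c • t q := by
  simp [op, Finsupp.lift_apply, Finsupp.sum_single_index]

variable (K) in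
/-- Action of a vertex. -/
noncomputable def opV (v : V) : Module.End K (Mod K src rng) :=
  op K fun q => if src (q.1 0) = v then Finsupp.single q 1 else 0

variable (K) in
/-- Action of an edge. -/
noncomputable def opE (e : E) : Module.End K (Mod K src rng) :=
  op K fun q => if h : src (q.1 0) = rng e then Finsupp.single (pcons e q h) 1 else 0

variable (K) in
/-- Action of a ghost edge. -/
noncomputable def opG (e : E) : Module.End K (Mod K src rng) :=
  op K fun q => if q.1 0 = e then Finsupp.single (ptail q) 1 else 0



namespace LPAaux2
end LPAaux2

@[simp] lemma pcons_zero (e : E) (q : Pth src rng) (h : src (q.1 0) = rng e) :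
    (pcons e q h).1 0 = e := rfl

@[simp] lemma pcons_succ (e : E) (q : Pth src rng) (h : src (q.1 0) = rng e) (n : ℕ) :
    (pcons e q h).1 (n+1) = q.1 n := rfl

@[simp] lemma ptail_fst (q : Pth src rng) (n : ℕ) : (ptail q).1 n = q.1 (n+1) := rfl

section Rels

@[simp] lemma opV_single (v : V) (q : Pth src rng) :
    opV K v (Finsupp.single q (1:K)) =
      (if src (q.1 0) = v then Finsupp.single q 1 else 0) := by
  simp [opV]

@[simp] lemma opE_single (e : E) (q : Pth src rng) :
    opE K e (Finsupp.single q (1:K)) =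
      (if h : src (q.1 0) = rng e then Finsupp.single (pcons e q h) 1 else 0) := by
  simp [opE]

@[simp] lemma opG_single (e : E) (q : Pth src rng) :
    opG K e (Finsupp.single q (1:K)) =
      (if q.1 0 = e then Finsupp.single (ptail q) 1 else 0) := by
  simp [opG]

lemma end_ext {f g : Module.End K (Mod K src rng)}
    (h : ∀ q : Pth src rng, f (Finsupp.single q 1) = g (Finsupp.single q 1)) : f = g := by
  apply Finsupp.lhom_ext
  intro q c
  have hc : (Finsupp.single q c : Mod K src rng) = c • Finsupp.single q 1 := by
    simp [Finsupp.smul_single]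
  rw [hc, map_smul, map_smul, h]

lemma src_ptail (q : Pth src rng) : src (q.1 1) = rng (q.1 0) :=
  (q.2 0).symm

lemma opV_mul_opV_same (v : V) : opV K v * opV K v = opV (src := src) (rng := rng) K v := by
  apply end_ext; intro q
  by_cases h : src (q.1 0) = v <;> simp [Module.End.mul_apply, h]

lemma opV_mul_opV_ne (v v' : V) (h : v ≠ v') :
    opV K v * opV K v' = (0 : Module.End K (Mod K src rng)) := by
  apply end_ext; intro q
  by_cases h' : src (q.1 0) = v'
  · have : ¬ src (q.1 0) = v := by rw [h']; exact fun hh => h hh.symm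
    simp [Module.End.mul_apply, h', this]
    exact fun hh => h hh.symm
  · simp [Module.End.mul_apply, h']

lemma opV_src_mul_opE (e : E) :
    opV K (src e) * opE K e = opE (src := src) (rng := rng) K e := by
  apply end_ext; intro q
  by_cases h : src (q.1 0) = rng e <;> simp [Module.End.mul_apply, h]

lemma opE_mul_opV_rng (e : E) :
    opE K e * opV K (rng e) = opE (src := src) (rng := rng) K e := by
  apply end_ext; intro q
  by_cases h : src (q.1 0) = rng e <;> simp [Module.End.mul_apply, h]

lemma opV_rng_mul_opG (e : E) :
    opV K (rng e) * opG K e = opG (src := src) (rng := rng) K e := by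
  apply end_ext; intro q
  by_cases h : q.1 0 = e
  · have h2 : src (q.1 1) = rng e := (q.2 0).symm.trans (congrArg rng h)
    simp [Module.End.mul_apply, h, h2]
  · simp [Module.End.mul_apply, h]

lemma opG_mul_opV_src (e : E) :
    opG K e * opV K (src e) = opG (src := src) (rng := rng) K e := by
  apply end_ext; intro q
  by_cases h : q.1 0 = e
  · have h2 : src (q.1 0) = src e := by rw [h]
    simp [Module.End.mul_apply, h, h2]
  · by_cases h' : src (q.1 0) = src e <;> simp [Module.End.mul_apply, h, h']

lemma opG_mul_opE_same (e : E) :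
    opG K e * opE K e = opV (src := src) (rng := rng) K (rng e) := by
  apply end_ext; intro q
  by_cases h : src (q.1 0) = rng e <;> simp [Module.End.mul_apply, h]

lemma opG_mul_opE_ne (e f : E) (hef : e ≠ f) :
    opG K e * opE K f = (0 : Module.End K (Mod K src rng)) := by
  apply end_ext; intro q
  by_cases h : src (q.1 0) = rng f
  · simp [Module.End.mul_apply, h, Ne.symm hef]
  · simp [Module.End.mul_apply, h]

lemma opE_mul_opG_single (e : E) (q : Pth src rng) :
    (opE K e * opG K e : Module.End K (Mod K src rng)) (Finsupp.single q (1:K)) =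
      if q.1 0 = e then Finsupp.single q 1 else 0 := by
  by_cases h : q.1 0 = e
  · have h2 : src ((ptail q).1 0) = rng e := (q.2 0).symm.trans (congrArg rng h)
    have h3 : pcons e (ptail q) h2 = q :=
      Subtype.ext (funext fun n => by cases n with
        | zero => exact h.symm
        | succ m => rfl)
    have h2' : src (q.1 1) = rng e := h2
    simp [Module.End.mul_apply, h, h2', h3]
  · simp [Module.End.mul_apply, h]

variable [Fintype V]

lemma opsum_ck2 (v : V) (hreg : IsRegularVertex src v) :
    opV (src := src) (rng := rng) K v =
      ∑ e ∈ (Set.not_infinite.mp hreg.2).toFinset,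
        opE (src := src) (rng := rng) K e * opG (src := src) (rng := rng) K e := by
  apply end_ext; intro q
  rw [LinearMap.sum_apply]
  rw [Finset.sum_congr rfl (fun e _ => opE_mul_opG_single e q)]
  by_cases h : src (q.1 0) = v
  · rw [Finset.sum_eq_single (q.1 0)]
    · simp [h]
    · intro e _ hne; exact if_neg fun hh => hne hh.symm
    · intro hnot
      exact absurd (by simpa using h) hnot
  · rw [Finset.sum_eq_zero, opV_single, if_neg h]
    intro e he
    rw [if_neg]
    intro hh
    exact h (by simpa [← hh] using he)

lemma opsum_unit :
    ∑ v : V, opV K v = (1 : Module.End K (Mod K (V := V) src rng)) := by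
  apply end_ext; intro q
  rw [LinearMap.sum_apply]
  simp [Finset.sum_ite_eq]

end Rels

section Rep

variable (K V E : Type) [Field K] [Fintype V] (src rng : E → V)

/-- The representation of the free algebra on `Mod K src rng`. -/
def phi : FreeAlgebra K (V ⊕ E ⊕ E) →ₐ[K] Module.End K (Mod K src rng) :=
  FreeAlgebra.lift K (Sum.elim (fun v => opV K v)
    (Sum.elim (fun e => opE K e) (fun e => opG K e)))

@[simp] lemma phi_vtx (v : V) : phi K V E src rng (vtx K V E v) = opV K v := by
  simp [phi, vtx, FreeAlgebra.lift_ι_apply]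

@[simp] lemma phi_edg (e : E) : phi K V E src rng (edg K V E e) = opE K e := by
  simp [phi, edg, FreeAlgebra.lift_ι_apply]

@[simp] lemma phi_ghe (e : E) : phi K V E src rng (ghe K V E e) = opG K e := by
  simp [phi, ghe, FreeAlgebra.lift_ι_apply]

lemma phi_rel : ∀ ⦃x y : FreeAlgebra K (V ⊕ E ⊕ E)⦄,
    LeavittRel K V E src rng x y → phi K V E src rng x = phi K V E src rng y := by
  intro x y h
  induction h with
  | vtx_same v => simp [map_mul, opV_mul_opV_same]
  | vtx_ne v v' h => simp [map_mul, opV_mul_opV_ne v v' h]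
  | src_edge e => simp [map_mul, opV_src_mul_opE]
  | edge_rng e => simp [map_mul, opE_mul_opV_rng]
  | rng_ghost e => simp [map_mul, opV_rng_mul_opG]
  | ghost_src e => simp [map_mul, opG_mul_opV_src]
  | ck1_same e => simp [map_mul, opG_mul_opE_same]
  | ck1_ne e f h => simp [map_mul, opG_mul_opE_ne e f h]
  | ck2 v hreg => simp [map_sum, map_mul, opsum_ck2 v hreg]
  | unit => simp [map_sum, opsum_unit]

/-- The representation of the Leavitt path algebra on `Mod K src rng`. -/
def psi : LPA K V E src rng →ₐ[K] Module.End K (Mod K src rng) :=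
  RingQuot.liftAlgHom K ⟨phi K V E src rng, phi_rel K V E src rng⟩

@[simp] lemma psi_Edg (e : E) : psi K V E src rng (Edg K V E src rng e) = opE K e := by
  rw [psi, Edg, RingQuot.liftAlgHom_mkAlgHom_apply]; simp

@[simp] lemma psi_Ghe (e : E) : psi K V E src rng (Ghe K V E src rng e) = opG K e := by
  rw [psi, Ghe, RingQuot.liftAlgHom_mkAlgHom_apply]; simp

end Rep

section Sanov

open scoped Pointwise

/-- Nonzero rational plane vectors. -/
def Pl : Type := {v : Fin 2 → ℚ // v ≠ 0}

instance : MulAction (Matrix (Fin 2) (Fin 2) ℚ)ˣ Pl where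
  smul g v := ⟨(g : Matrix (Fin 2) (Fin 2) ℚ).mulVec v.1, by
    intro h0
    apply v.2
    have h1 : ((g⁻¹ : (Matrix (Fin 2) (Fin 2) ℚ)ˣ) : Matrix (Fin 2) (Fin 2) ℚ).mulVec
        (((g : (Matrix (Fin 2) (Fin 2) ℚ)ˣ) : Matrix (Fin 2) (Fin 2) ℚ).mulVec v.1) = 0 := by
      rw [h0, Matrix.mulVec_zero]
    rwa [Matrix.mulVec_mulVec, Units.inv_mul, Matrix.one_mulVec] at h1⟩
  one_smul v := Subtype.ext (by
    show ((1 : (Matrix (Fin 2) (Fin 2) ℚ)ˣ) : Matrix (Fin 2) (Fin 2) ℚ).mulVec v.1 = v.1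
    rw [Units.val_one, Matrix.one_mulVec])
  mul_smul g h v := Subtype.ext (by
    show ((g * h : (Matrix (Fin 2) (Fin 2) ℚ)ˣ) : Matrix (Fin 2) (Fin 2) ℚ).mulVec v.1 = _
    rw [Units.val_mul, ← Matrix.mulVec_mulVec]
    rfl)

lemma Pl_smul_fst (g : (Matrix (Fin 2) (Fin 2) ℚ)ˣ) (v : Pl) :
    (g • v).1 = (g : Matrix (Fin 2) (Fin 2) ℚ).mulVec v.1 := rfl

/-- The Sanov matrices as units. -/
def SanA : (Matrix (Fin 2) (Fin 2) ℚ)ˣ :=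
  ⟨!![1, 2; 0, 1], !![1, -2; 0, 1],
   by rw [Matrix.mul_fin_two, Matrix.one_fin_two]; norm_num,
   by rw [Matrix.mul_fin_two, Matrix.one_fin_two]; norm_num⟩

def SanB : (Matrix (Fin 2) (Fin 2) ℚ)ˣ :=
  ⟨!![1, 0; 2, 1], !![1, 0; -2, 1],
   by rw [Matrix.mul_fin_two, Matrix.one_fin_two]; norm_num,
   by rw [Matrix.mul_fin_two, Matrix.one_fin_two]; norm_num⟩

def San : Bool → (Matrix (Fin 2) (Fin 2) ℚ)ˣ := fun t => cond t SanA SanB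

def XA : Set Pl := {v | v.1 1 = 0 ∨ v.1 0 * v.1 1 > (v.1 1)^2}
def YA : Set Pl := {v | v.1 0 * v.1 1 ≤ -(v.1 1)^2 ∧ v.1 1 ≠ 0}
def XB : Set Pl := {v | v.1 0 = 0 ∨ v.1 0 * v.1 1 ≥ (v.1 0)^2}
def YB : Set Pl := {v | v.1 0 * v.1 1 < -(v.1 0)^2 ∧ v.1 0 ≠ 0}

lemma mulVec_two (a b c d : ℚ) (v : Fin 2 → ℚ) :
    (!![a, b; c, d] : Matrix (Fin 2) (Fin 2) ℚ).mulVec v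
      = ![a * v 0 + b * v 1, c * v 0 + d * v 1] := by
  funext i
  fin_cases i <;>
    simp [Matrix.mulVec, dotProduct, Fin.sum_univ_two]

lemma vec_ne_zero (v : Pl) : v.1 0 ≠ 0 ∨ v.1 1 ≠ 0 := by
  by_contra h
  push_neg at h
  exact v.2 (funext fun i => by fin_cases i <;> simp [h.1, h.2])

lemma disj_XA_XB : Disjoint XA XB := by
  rw [Set.disjoint_left]
  rintro v (h1 | h1) (h2 | h2)
  · exact absurd (funext fun i => by fin_cases i <;> simp [h1, h2]) v.2
  · have hx : v.1 0 ≠ 0 := (vec_ne_zero v).resolve_right (not_not_intro h1)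
    have hx2 : 0 < v.1 0 ^ 2 := by positivity
    rw [h1] at h2; simp at h2; exact hx h2
  · rw [h2] at h1; simp at h1; nlinarith [sq_nonneg (v.1 1)]
  · nlinarith [sq_nonneg (v.1 0 - v.1 1)]

lemma disj_YA_YB : Disjoint YA YB := by
  rw [Set.disjoint_left]
  rintro v ⟨h1, h1'⟩ ⟨h2, h2'⟩
  nlinarith [sq_nonneg (v.1 0 + v.1 1)]

lemma disj_XA_YA : Disjoint XA YA := by
  rw [Set.disjoint_left]
  rintro v (h1 | h1) ⟨h2, h2'⟩
  · exact h2' h1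
  · nlinarith [sq_nonneg (v.1 1)]

lemma disj_XA_YB : Disjoint XA YB := by
  rw [Set.disjoint_left]
  rintro v (h1 | h1) ⟨h2, h2'⟩
  · have hx2 : 0 < v.1 0 ^ 2 := by positivity
    rw [h1] at h2; simp at h2; linarith
  · nlinarith [sq_nonneg (v.1 0), sq_nonneg (v.1 1)]

lemma disj_XB_YA : Disjoint XB YA := by
  rw [Set.disjoint_left]
  rintro v (h1 | h1) ⟨h2, h2'⟩
  · have hy2 : 0 < v.1 1 ^ 2 := by positivity
    rw [h1] at h2; simp at h2; exact h2' h2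
  · have hy2 : 0 < v.1 1 ^ 2 := by positivity
    nlinarith [sq_nonneg (v.1 0)]

lemma disj_XB_YB : Disjoint XB YB := by
  rw [Set.disjoint_left]
  rintro v (h1 | h1) ⟨h2, h2'⟩
  · exact h2' h1
  · nlinarith [sq_nonneg (v.1 0)]

lemma san_injective : Function.Injective (FreeGroup.lift San) := by
  apply FreeGroup.injective_lift_of_ping_pong San
    (fun t => cond t XA XB) (fun t => cond t YA YB)
  · intro i
    cases i
    · exact ⟨⟨![0, 1], by intro h; simpa using congrFun h 1⟩, by
        simp only [Bool.cond_false]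
        exact Or.inl rfl⟩
    · exact ⟨⟨![1, 0], by intro h; simpa using congrFun h 0⟩, by
        simp only [Bool.cond_true]
        exact Or.inl rfl⟩
  · intro i j hij
    cases i <;> cases j <;> simp_all [Function.onFun] <;>
      first
        | exact disj_XA_XB.symm
        | exact disj_XA_XB
  · intro i j hij
    cases i <;> cases j <;> simp_all [Function.onFun] <;>
      first
        | exact disj_YA_YB.symm
        | exact disj_YA_YB
  · intro i j
    cases i <;> cases j <;> simp only [Bool.cond_false, Bool.cond_true]
    · exact disj_XB_YB
    · exact disj_XB_YA
    · exact disj_XA_YB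
    · exact disj_XA_YA
  · intro i
    cases i
    · rintro _ ⟨v, hv, rfl⟩
      simp only [Bool.cond_false, Set.mem_compl_iff, YB, Set.mem_setOf_eq,
        not_and_or, not_lt, not_not] at hv ⊢
      show SanB • v ∈ XB
      have hmv : (SanB • v).1 = ![v.1 0, 2 * v.1 0 + v.1 1] := by
        rw [Pl_smul_fst]
        show (!![1, 0; 2, 1] : Matrix (Fin 2) (Fin 2) ℚ).mulVec v.1 = _
        rw [mulVec_two]; norm_num
      simp only [XB, Set.mem_setOf_eq, hmv]
      simp only [Matrix.cons_val_zero, Matrix.cons_val_one, Matrix.head_cons]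
      rcases hv with hv | hv
      · right; nlinarith
      · left; exact hv
    · rintro _ ⟨v, hv, rfl⟩
      simp only [Bool.cond_true, Set.mem_compl_iff, YA, Set.mem_setOf_eq,
        not_and_or, not_le, not_not] at hv ⊢
      show SanA • v ∈ XA
      have hmv : (SanA • v).1 = ![v.1 0 + 2 * v.1 1, v.1 1] := by
        rw [Pl_smul_fst]
        show (!![1, 2; 0, 1] : Matrix (Fin 2) (Fin 2) ℚ).mulVec v.1 = _
        rw [mulVec_two]; norm_num
      simp only [XA, Set.mem_setOf_eq, hmv]
      simp only [Matrix.cons_val_zero, Matrix.cons_val_one, Matrix.head_cons]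
      rcases hv with hv | hv
      · right; nlinarith
      · left; exact hv
  · intro i
    cases i
    · rintro _ ⟨v, hv, rfl⟩
      simp only [Bool.cond_false, Set.mem_compl_iff, XB, Set.mem_setOf_eq,
        not_or, not_le] at hv
      show San⁻¹ false • v ∈ YB
      have hmv : (San⁻¹ false • v).1 = ![v.1 0, -2 * v.1 0 + v.1 1] := by
        rw [Pi.inv_apply, Pl_smul_fst]
        show (!![1, 0; -2, 1] : Matrix (Fin 2) (Fin 2) ℚ).mulVec v.1 = _
        rw [mulVec_two]; norm_num
      simp only [YB, Set.mem_setOf_eq, hmv]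
      simp only [Matrix.cons_val_zero, Matrix.cons_val_one, Matrix.head_cons]
      exact ⟨by nlinarith [hv.2], hv.1⟩
    · rintro _ ⟨v, hv, rfl⟩
      simp only [Bool.cond_true, Set.mem_compl_iff, XA, Set.mem_setOf_eq,
        not_or, not_lt] at hv
      show San⁻¹ true • v ∈ YA
      have hmv : (San⁻¹ true • v).1 = ![v.1 0 - 2 * v.1 1, v.1 1] := by
        rw [Pi.inv_apply, Pl_smul_fst]
        show (!![1, -2; 0, 1] : Matrix (Fin 2) (Fin 2) ℚ).mulVec v.1 = _
        rw [mulVec_two]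
        funext i; fin_cases i <;> simp <;> ring
      simp only [YA, Set.mem_setOf_eq, hmv]
      simp only [Matrix.cons_val_zero, Matrix.cons_val_one, Matrix.head_cons]
      exact ⟨by nlinarith [hv.2], hv.1⟩

end Sanov

section Units

variable {R : Type} [Ring R]

lemma sq_zero_unit_mul (x : R) (hx : x * x = 0) : (1 + 2 * x) * (1 - 2 * x) = 1 := by
  have h4 : (2 * x) * (2 * x) = 0 := by
    simp [two_mul, add_mul, mul_add, hx]
  have h : (1 + 2 * x) * (1 - 2 * x) = 1 - (2 * x) * (2 * x) := by noncomm_ring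
  rw [h, h4, sub_zero]

lemma sq_zero_unit_mul' (x : R) (hx : x * x = 0) : (1 - 2 * x) * (1 + 2 * x) = 1 := by
  have h4 : (2 * x) * (2 * x) = 0 := by
    simp [two_mul, add_mul, mul_add, hx]
  have h : (1 - 2 * x) * (1 + 2 * x) = 1 - (2 * x) * (2 * x) := by noncomm_ring
  rw [h, h4, sub_zero]

end Units

section Nilpotent

variable (K V E : Type) [Field K] [Fintype V] (src rng : E → V)

lemma Ghe_sq (f : E) (hsf : src f ≠ rng f) :
    Ghe K V E src rng f * Ghe K V E src rng f = 0 := by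
  have h0 : RingQuot.mkAlgHom K (LeavittRel K V E src rng)
      (vtx K V E (src f) * vtx K V E (rng f)) = 0 := by
    rw [RingQuot.mkAlgHom_rel K (LeavittRel.vtx_ne (src f) (rng f) hsf), map_zero]
  calc Ghe K V E src rng f * Ghe K V E src rng f
      = RingQuot.mkAlgHom K (LeavittRel K V E src rng) (ghe K V E f * vtx K V E (src f)) *
        RingQuot.mkAlgHom K (LeavittRel K V E src rng) (vtx K V E (rng f) * ghe K V E f) := by
        rw [Ghe, RingQuot.mkAlgHom_rel K (LeavittRel.ghost_src f),
          RingQuot.mkAlgHom_rel K (LeavittRel.rng_ghost f)]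
    _ = RingQuot.mkAlgHom K (LeavittRel K V E src rng) (ghe K V E f) *
        RingQuot.mkAlgHom K (LeavittRel K V E src rng)
          (vtx K V E (src f) * vtx K V E (rng f)) *
        RingQuot.mkAlgHom K (LeavittRel K V E src rng) (ghe K V E f) := by
        simp only [map_mul, mul_assoc]
    _ = 0 := by rw [h0, mul_zero, zero_mul]

lemma Edg_sq (f : E) (hsf : src f ≠ rng f) :
    Edg K V E src rng f * Edg K V E src rng f = 0 := by
  have h0 : RingQuot.mkAlgHom K (LeavittRel K V E src rng)
      (vtx K V E (rng f) * vtx K V E (src f)) = 0 := by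
    rw [RingQuot.mkAlgHom_rel K (LeavittRel.vtx_ne (rng f) (src f) (Ne.symm hsf)), map_zero]
  calc Edg K V E src rng f * Edg K V E src rng f
      = RingQuot.mkAlgHom K (LeavittRel K V E src rng) (edg K V E f * vtx K V E (rng f)) *
        RingQuot.mkAlgHom K (LeavittRel K V E src rng) (vtx K V E (src f) * edg K V E f) := by
        rw [Edg, RingQuot.mkAlgHom_rel K (LeavittRel.edge_rng f),
          RingQuot.mkAlgHom_rel K (LeavittRel.src_edge f)]
    _ = RingQuot.mkAlgHom K (LeavittRel K V E src rng) (edg K V E f) *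
        RingQuot.mkAlgHom K (LeavittRel K V E src rng)
          (vtx K V E (rng f) * vtx K V E (src f)) *
        RingQuot.mkAlgHom K (LeavittRel K V E src rng) (edg K V E f) := by
        simp only [map_mul, mul_assoc]
    _ = 0 := by rw [h0, mul_zero, zero_mul]

end Nilpotent

section Main

variable (K V E : Type) [Field K] [CharZero K] [Fintype V] (src rng : E → V)

lemma main_injective
    (f : E) (p : ℕ → E) (hp : ∀ n : ℕ, rng (p n) = src (p (n + 1)))
    (hfp : rng f = src (p 0)) (hsf : src f ≠ rng f)
    (a b : (LPA K V E src rng)ˣ)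
    (ha : (a : LPA K V E src rng) = 1 + 2 * Ghe K V E src rng f)
    (hai : (↑(a⁻¹) : LPA K V E src rng) = 1 - 2 * Ghe K V E src rng f)
    (hb : (b : LPA K V E src rng) = 1 + 2 * Edg K V E src rng f)
    (hbi : (↑(b⁻¹) : LPA K V E src rng) = 1 - 2 * Edg K V E src rng f) :
    Function.Injective (FreeGroup.lift fun t : Bool => if t then a else b) := by
  set au : Bool → (LPA K V E src rng)ˣ := fun t => if t then a else b with hau
  set pp : Pth src rng := ⟨p, hp⟩ with hppdef
  set fp : Pth src rng := pcons f ⟨p, hp⟩ hfp.symm with hfpdef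
  set bas : Fin 2 → Mod K src rng := ![Finsupp.single pp 1, Finsupp.single fp 1] with hbas
  have hp0f : p 0 ≠ f := by
    intro h
    apply hsf
    rw [hfp, ← h]
  have hGu : opG K f (Finsupp.single pp (1:K)) = 0 := by
    rw [opG_single, if_neg]
    exact hp0f
  have hGw : opG K f (Finsupp.single fp (1:K)) = Finsupp.single pp 1 := by
    rw [opG_single, if_pos (show fp.1 0 = f from rfl)]
    rfl
  have hEu : opE K f (Finsupp.single pp (1:K)) = Finsupp.single fp 1 := by
    rw [opE_single, dif_pos hfp.symm]
  have hEw : opE K f (Finsupp.single fp (1:K)) = 0 := by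
    rw [opE_single, dif_neg]
    exact fun hh => hsf hh
  have hSanA : ((SanA : (Matrix (Fin 2) (Fin 2) ℚ)ˣ) : Matrix (Fin 2) (Fin 2) ℚ)
      = !![1, 2; 0, 1] := rfl
  have hSanAi : ((SanA⁻¹ : (Matrix (Fin 2) (Fin 2) ℚ)ˣ) : Matrix (Fin 2) (Fin 2) ℚ)
      = !![1, -2; 0, 1] := rfl
  have hSanB : ((SanB : (Matrix (Fin 2) (Fin 2) ℚ)ˣ) : Matrix (Fin 2) (Fin 2) ℚ)
      = !![1, 0; 2, 1] := rfl
  have hSanBi : ((SanB⁻¹ : (Matrix (Fin 2) (Fin 2) ℚ)ˣ) : Matrix (Fin 2) (Fin 2) ℚ)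
      = !![1, 0; -2, 1] := rfl
  have key : ∀ g : FreeGroup Bool, ∀ i : Fin 2,
      psi K V E src rng ((FreeGroup.lift au g : (LPA K V E src rng)ˣ) : LPA K V E src rng)
          (bas i)
        = ∑ j : Fin 2,
            ((((FreeGroup.lift San g : (Matrix (Fin 2) (Fin 2) ℚ)ˣ) :
              Matrix (Fin 2) (Fin 2) ℚ) j i : K)) • bas j := by
    intro g
    induction g using FreeGroup.induction_on with
    | C1 =>
      intro i
      simp only [map_one, Units.val_one, Module.End.one_apply, Fin.sum_univ_two,
        Matrix.one_apply]
      fin_cases i <;> norm_num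
    | of x =>
      have hpure : (pure x : FreeGroup Bool) = FreeGroup.of x := rfl
      intro i
      rw [FreeGroup.lift_apply_of, FreeGroup.lift_apply_of]
      cases x
      · -- b, SanB
        have hval : ((au false : (LPA K V E src rng)ˣ) : LPA K V E src rng)
            = 1 + 2 * Edg K V E src rng f := by rw [hau]; simpa using hb
        rw [hval]
        simp only [map_add, map_mul, map_one, map_ofNat, psi_Edg,
          LinearMap.add_apply, Module.End.one_apply, two_mul, Module.End.mul_apply]
        show _ = ∑ j : Fin 2, ((((San false :
            (Matrix (Fin 2) (Fin 2) ℚ)ˣ) : Matrix (Fin 2) (Fin 2) ℚ) j i : K)) • bas j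
        have : San false = SanB := rfl
        rw [this]
        fin_cases i <;>
          simp [hbas, Fin.sum_univ_two, hSanB, Fin.mk_zero, Fin.mk_one,
            hEu, hEw, two_smul, neg_smul, sub_eq_add_neg] <;> abel
      · -- a, SanA
        have hval : ((au true : (LPA K V E src rng)ˣ) : LPA K V E src rng)
            = 1 + 2 * Ghe K V E src rng f := by rw [hau]; simpa using ha
        rw [hval]
        simp only [map_add, map_mul, map_one, map_ofNat, psi_Ghe,
          LinearMap.add_apply, Module.End.one_apply, two_mul, Module.End.mul_apply]
        show _ = ∑ j : Fin 2, ((((San true :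
            (Matrix (Fin 2) (Fin 2) ℚ)ˣ) : Matrix (Fin 2) (Fin 2) ℚ) j i : K)) • bas j
        have : San true = SanA := rfl
        rw [this]
        fin_cases i <;>
          simp [hbas, Fin.sum_univ_two, hSanA, Fin.mk_zero, Fin.mk_one,
            hGu, hGw, two_smul, neg_smul, sub_eq_add_neg] <;> abel
    | inv_of x ih =>
      clear ih
      have hpure : (pure x : FreeGroup Bool) = FreeGroup.of x := rfl
      intro i
      rw [map_inv, map_inv, FreeGroup.lift_apply_of, FreeGroup.lift_apply_of]
      cases x
      · have hval : (((au false)⁻¹ : (LPA K V E src rng)ˣ) : LPA K V E src rng)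
            = 1 - 2 * Edg K V E src rng f := by rw [hau]; simpa using hbi
        rw [hval]
        simp only [map_sub, map_mul, map_one, map_ofNat, psi_Edg,
          LinearMap.sub_apply, Module.End.one_apply, two_mul, Module.End.mul_apply]
        show _ = ∑ j : Fin 2, (((((San false)⁻¹ :
            (Matrix (Fin 2) (Fin 2) ℚ)ˣ) : Matrix (Fin 2) (Fin 2) ℚ) j i : K)) • bas j
        have : San false = SanB := rfl
        rw [this]
        fin_cases i <;>
          simp [hbas, Fin.sum_univ_two, hSanBi, Fin.mk_zero, Fin.mk_one,
            hEu, hEw, two_smul, neg_smul, sub_eq_add_neg] <;> abel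
      · have hval : (((au true)⁻¹ : (LPA K V E src rng)ˣ) : LPA K V E src rng)
            = 1 - 2 * Ghe K V E src rng f := by rw [hau]; simpa using hai
        rw [hval]
        simp only [map_sub, map_mul, map_one, map_ofNat, psi_Ghe,
          LinearMap.sub_apply, Module.End.one_apply, two_mul, Module.End.mul_apply]
        show _ = ∑ j : Fin 2, (((((San true)⁻¹ :
            (Matrix (Fin 2) (Fin 2) ℚ)ˣ) : Matrix (Fin 2) (Fin 2) ℚ) j i : K)) • bas j
        have : San true = SanA := rfl
        rw [this]
        fin_cases i <;>
          simp [hbas, Fin.sum_univ_two, hSanAi, Fin.mk_zero, Fin.mk_one,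
            hGu, hGw, two_smul, neg_smul, sub_eq_add_neg] <;> abel
    | mul x y ihx ihy =>
      intro i
      rw [map_mul, map_mul, Units.val_mul, map_mul, Module.End.mul_apply, ihy i, map_sum]
      rw [Finset.sum_congr rfl fun j _ => map_smul _ _ _]
      rw [Finset.sum_congr rfl fun j _ => by rw [ihx j]]
      rw [Units.val_mul]
      simp only [Finset.smul_sum, Matrix.mul_apply, Rat.cast_sum, Rat.cast_mul]
      rw [Finset.sum_comm]
      congr 1
      funext k
      rw [Finset.sum_smul]
      congr 1
      funext j
      rw [smul_smul, mul_comm]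
  rw [injective_iff_map_eq_one]
  intro g hg
  have hmat : ∀ i k : Fin 2,
      ((((FreeGroup.lift San g : (Matrix (Fin 2) (Fin 2) ℚ)ˣ) :
        Matrix (Fin 2) (Fin 2) ℚ) k i : K)) = if k = i then 1 else 0 := by
    intro i k
    have h := key g i
    rw [hg, Units.val_one, map_one, Module.End.one_apply] at h
    have hne : pp ≠ fp := by
      intro hh
      exact hp0f (congrArg (fun q : Pth src rng => q.1 0) hh)
    have h2 := DFunLike.congr_fun h (if k = 0 then pp else fp)
    rw [Fin.sum_univ_two] at h2
    fin_cases i <;> fin_cases k <;>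
      simpa [hbas, Finsupp.single_apply, hne, hne.symm, Finsupp.add_apply] using h2.symm
  have hone : (FreeGroup.lift San g : (Matrix (Fin 2) (Fin 2) ℚ)ˣ) = 1 := by
    apply Units.ext
    rw [Units.val_one]
    funext k i
    have := hmat i k
    rw [Matrix.one_apply]
    by_cases hk : k = i
    · rw [if_pos hk]
      rw [if_pos hk] at this
      exact_mod_cast this
    · rw [if_neg hk]
      rw [if_neg hk] at this
      exact_mod_cast this
  have := san_injective (by rw [hone, map_one] : FreeGroup.lift San g = FreeGroup.lift San 1)
  exact this


end Main

end LPAaux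
end

/-- Let `K` be a field of characteristic `0` and `E` a directed graph with finitely
many vertices containing an edge `f` and an infinite path `p` (a sequence of edges
with `r(pₙ) = s(p_{n+1})`) such that `r(f) = s(p)` and `s(f) ≠ r(f)` (so `f` is the
initial edge of the infinite path `f·p`). Then `1 + 2f*` and `1 + 2f` are invertible in
`L_K(E)` (with inverses `1 − 2f*` and `1 − 2f`), and these units generate a non-cyclic
free subgroup of `L_K(E)ˣ`. -/
theorem free_subgroup_of_initial_edge_of_infinite_path
    (K V E : Type) [Field K] [CharZero K] [Fintype V] (src rng : E → V)
    (f : E) (p : ℕ → E) (hp : ∀ n : ℕ, rng (p n) = src (p (n + 1)))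
    (hfp : rng f = src (p 0)) (hsf : src f ≠ rng f) :
    ∃ a b : (LPA K V E src rng)ˣ,
      (a : LPA K V E src rng) = 1 + 2 * Ghe K V E src rng f ∧
      (↑(a⁻¹) : LPA K V E src rng) = 1 - 2 * Ghe K V E src rng f ∧
      (b : LPA K V E src rng) = 1 + 2 * Edg K V E src rng f ∧
      (↑(b⁻¹) : LPA K V E src rng) = 1 - 2 * Edg K V E src rng f ∧
      Function.Injective (FreeGroup.lift fun t : Bool => if t then a else b) := by
  have hG := LPAaux.Ghe_sq K V E src rng f hsf
  have hE := LPAaux.Edg_sq K V E src rng f hsf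
  refine ⟨⟨1 + 2 * Ghe K V E src rng f, 1 - 2 * Ghe K V E src rng f,
      LPAaux.sq_zero_unit_mul _ hG, LPAaux.sq_zero_unit_mul' _ hG⟩,
    ⟨1 + 2 * Edg K V E src rng f, 1 - 2 * Edg K V E src rng f,
      LPAaux.sq_zero_unit_mul _ hE, LPAaux.sq_zero_unit_mul' _ hE⟩,
    rfl, rfl, rfl, rfl, ?_⟩
  exact LPAaux.main_injective K V E src rng f p hp hfp hsf _ _ rfl rfl rfl rfl
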